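/- arXiv:2001.01149 — 2 statements merged into one kernel-verified Lean document; each statement's English description precedes it below -/
import Mathlib

section
/- There exists an absolute constant C > 0 such that the following holds. Let m ≥ 2, let K_{m,m} be the complete bipartite graph with parts A and B of size m, and let H be a spanning subgraph of K_{m,m} whose maximum degree is at most D, where D ≤ m/2. Then the number of perfect matchings of the graph K_{m,m} ∖ H (the bipartite graph on A ∪ B whose edges are those of K_{m,m} not in H) is at most exp(C·D·(log m)/m) · m! · exp(−|E(H)|/m), where |E(H)| is the number of edges of H. -/
open Finset

variable {m : ℕ}

/-- The set of partial matchings: injective on `A`, respecting lists `G`, identity off `A`. -/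
def MB (A : Finset (Fin m)) (G : Fin m → Finset (Fin m)) : Finset (Fin m → Fin m) :=
  Finset.univ.filter fun f =>
    (∀ a ∈ A, f a ∈ G a) ∧ (∀ a ∈ A, ∀ b ∈ A, f a = f b → a = b) ∧ ∀ a, a ∉ A → f a = a

lemma mem_MB {A : Finset (Fin m)} {G : Fin m → Finset (Fin m)} {f : Fin m → Fin m} :
    f ∈ MB A G ↔
      (∀ a ∈ A, f a ∈ G a) ∧ (∀ a ∈ A, ∀ b ∈ A, f a = f b → a = b) ∧ ∀ a, a ∉ A → f a = a := by
  simp [MB]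

lemma MB_card_empty (G : Fin m → Finset (Fin m)) : (MB ∅ G).card ≤ 1 := by
  refine Finset.card_le_one.2 fun f hf g hg => ?_
  rw [mem_MB] at hf hg
  funext a
  rw [hf.2.2 a (by simp), hg.2.2 a (by simp)]

/-- fiber decomposition at a row `i ∈ A`. -/
lemma MB_card_fiber {A : Finset (Fin m)} {G : Fin m → Finset (Fin m)} {i : Fin m} (hi : i ∈ A) :
    (MB A G).card = ∑ j ∈ G i, ((MB A G).filter fun f => f i = j).card :=
  Finset.card_eq_sum_card_fiberwise fun f hf => (mem_MB.1 hf).1 i hi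

/-- the fiber is itself a matching count for the reduced problem. -/
lemma MB_fiber_card {A : Finset (Fin m)} {G : Fin m → Finset (Fin m)} {i : Fin m} {j : Fin m}
    (hi : i ∈ A) (hj : j ∈ G i) :
    ((MB A G).filter fun f => f i = j).card
      = (MB (A.erase i) fun a => (G a).erase j).card := by
  apply Finset.card_bij' (fun f _ => Function.update f i i) (fun g _ => Function.update g i j)
  · -- left inverse
    intro f hf
    rw [Finset.mem_filter] at hf
    funext a
    by_cases hai : a = i
    · subst hai; simp [hf.2]
    · simp [Function.update_of_ne hai]
  · -- right inverse
    intro g hg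
    rw [mem_MB] at hg
    funext a
    by_cases hai : a = i
    · subst hai
      simp [hg.2.2 a (Finset.notMem_erase a A)]
    · simp [Function.update_of_ne hai]

  · -- forward maps into target
    intro f hf
    rw [Finset.mem_filter, mem_MB] at hf
    obtain ⟨⟨h1, h2, h3⟩, hfij⟩ := hf
    rw [mem_MB]
    refine ⟨fun a ha => ?_, fun a ha b hb hab => ?_, fun a ha => ?_⟩
    · rw [Finset.mem_erase] at ha
      rw [Function.update_of_ne ha.1]
      refine Finset.mem_erase.2 ⟨?_, h1 a ha.2⟩
      intro hfa
      exact ha.1 (h2 a ha.2 i hi (by rw [hfa, hfij]))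
    · rw [Finset.mem_erase] at ha hb
      rw [Function.update_of_ne ha.1, Function.update_of_ne hb.1] at hab
      exact h2 a ha.2 b hb.2 hab
    · by_cases hai : a = i
      · subst hai; simp
      · rw [Function.update_of_ne hai]
        exact h3 a fun h => ha (Finset.mem_erase.2 ⟨hai, h⟩)
  · -- backward maps into source
    intro g hg
    rw [mem_MB] at hg
    obtain ⟨h1, h2, h3⟩ := hg
    rw [Finset.mem_filter, mem_MB]
    refine ⟨⟨fun a ha => ?_, fun a ha b hb hab => ?_, fun a ha => ?_⟩, by simp⟩
    · by_cases hai : a = i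
      · subst hai; simpa using hj
      · rw [Function.update_of_ne hai]
        exact Finset.mem_of_mem_erase (h1 a (Finset.mem_erase.2 ⟨hai, ha⟩))
    · by_cases hai : a = i <;> by_cases hbi : b = i
      · rw [hai, hbi]
      · subst hai
        rw [Function.update_self, Function.update_of_ne hbi] at hab
        exact absurd hab.symm
          (Finset.ne_of_mem_erase (h1 b (Finset.mem_erase.2 ⟨hbi, hb⟩)))
      · subst hbi
        rw [Function.update_self, Function.update_of_ne hai] at hab
        exact absurd hab (Finset.ne_of_mem_erase (h1 a (Finset.mem_erase.2 ⟨hai, ha⟩)))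
      · rw [Function.update_of_ne hai, Function.update_of_ne hbi] at hab
        exact h2 a (Finset.mem_erase.2 ⟨hai, ha⟩) b (Finset.mem_erase.2 ⟨hbi, hb⟩) hab
    · have hai : a ≠ i := fun h => ha (h ▸ hi)
      rw [Function.update_of_ne hai]
      exact h3 a fun h => ha (Finset.mem_of_mem_erase h)
section helpers

variable {m : ℕ}

/-- Key counting: a matching hits every list `G a` the full `(G a).card` times. -/
lemma MB_count_full {A B : Finset (Fin m)} {G : Fin m → Finset (Fin m)}
    (hB : ∀ a ∈ A, G a ⊆ B) (hcard : B.card = A.card)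
    {f : Fin m → Fin m} (hf : f ∈ (MB A G : Finset (Fin m → Fin m)))
    {a : Fin m} (ha : a ∈ A) :
    (A.filter fun i => f i ∈ G a).card = (G a).card := by
  rw [mem_MB] at hf
  obtain ⟨h1, h2, _⟩ := hf
  have hinj : Set.InjOn f ↑A := fun x hx y hy => h2 x hx y hy
  have himg : A.image f = B := by
    apply Finset.eq_of_subset_of_card_le
    · intro j hj
      obtain ⟨i, hi, rfl⟩ := Finset.mem_image.1 hj
      exact hB i hi (h1 i hi)
    · rw [Finset.card_image_of_injOn hinj, hcard]
  apply Finset.card_bij (fun i _ => f i)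
  · intro i hi
    exact (Finset.mem_filter.1 hi).2
  · intro x hx y hy hxy
    exact h2 x (Finset.mem_filter.1 hx).1 y (Finset.mem_filter.1 hy).1 hxy
  · intro j hj
    have : j ∈ A.image f := himg ▸ hB a ha hj
    obtain ⟨i, hi, rfl⟩ := Finset.mem_image.1 this
    exact ⟨i, Finset.mem_filter.2 ⟨hi, hj⟩, rfl⟩

lemma MB_count_erase {A B : Finset (Fin m)} {G : Fin m → Finset (Fin m)}
    (hB : ∀ a ∈ A, G a ⊆ B) (hcard : B.card = A.card)
    {f : Fin m → Fin m} (hf : f ∈ (MB A G : Finset (Fin m → Fin m)))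
    {a : Fin m} (ha : a ∈ A) :
    ((A.erase a).filter fun i => f i ∈ G a).card = (G a).card - 1 := by
  have key : (A.erase a).filter (fun i => f i ∈ G a)
      = (A.filter fun i => f i ∈ G a).erase a := by
    ext x; simp [Finset.mem_erase, Finset.mem_filter, and_assoc, and_comm, and_left_comm]
  rw [key, Finset.card_erase_of_mem, MB_count_full hB hcard hf ha]
  exact Finset.mem_filter.2 ⟨ha, (mem_MB.1 hf).1 a ha⟩

/-- swap of double sums over `A` with erased diagonal. -/
lemma sum_sum_erase {α M : Type*} [AddCommMonoid M] [DecidableEq α]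
    (A : Finset α) (F : α → α → M) :
    ∑ i ∈ A, ∑ a ∈ A.erase i, F i a = ∑ a ∈ A, ∑ i ∈ A.erase a, F i a := by
  simp only [← Finset.filter_ne', Finset.sum_filter]
  rw [Finset.sum_comm]
  refine Finset.sum_congr rfl fun a _ => Finset.sum_congr rfl fun i _ => ?_
  exact if_congr ne_comm rfl rfl

end helpers

/-- Convexity (Jensen for `x log x`) in elementary form. -/
lemma sum_mul_log_bound {ι : Type*} (K : Finset ι) (t : ι → ℝ) (ht : ∀ k ∈ K, 0 ≤ t k) :
    (∑ k ∈ K, t k) * Real.log (∑ k ∈ K, t k) ≤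
      (∑ k ∈ K, t k) * Real.log K.card + ∑ k ∈ K, t k * Real.log (t k) := by
  set s := ∑ k ∈ K, t k with hs
  rcases eq_or_lt_of_le (Finset.sum_nonneg ht) with h0 | hpos
  · have hzero : ∀ k ∈ K, t k = 0 :=
      (Finset.sum_eq_zero_iff_of_nonneg ht).1 h0.symm
    have hs0 : s = 0 := h0.symm
    rw [hs0]
    simp only [zero_mul, zero_add]
    rw [Finset.sum_eq_zero fun k hk => by rw [hzero k hk]; simp]
  · have hKne : K.Nonempty := by
      by_contra h
      rw [Finset.not_nonempty_iff_eq_empty] at h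
      simp [hs, h] at hpos
    have hn : (0:ℝ) < K.card := by exact_mod_cast Finset.card_pos.2 hKne
    have key : ∀ k ∈ K, t k * (Real.log s - Real.log K.card) + (t k - s / K.card)
        ≤ t k * Real.log (t k) := by
      intro k hk
      rcases eq_or_lt_of_le (ht k hk) with h0 | htk
      · rw [← h0]; simp [div_nonneg (le_of_lt hpos) (le_of_lt hn)]
        exact div_nonneg (by rw [hs]; exact le_of_lt hpos) (le_of_lt hn)
      · have hlog : 1 - s / (t k * K.card) ≤ Real.log (t k * K.card / s) := by
          have h1 : Real.log (s / (t k * K.card)) ≤ s / (t k * K.card) - 1 :=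
            Real.log_le_sub_one_of_pos (by positivity)
          have h2 : Real.log (s / (t k * K.card)) = - Real.log (t k * K.card / s) := by
            rw [← Real.log_inv]; congr 1; field_simp
          linarith [h2 ▸ h1]
        have hexp : Real.log (t k * K.card / s) = Real.log (t k) + Real.log K.card - Real.log s := by
          rw [Real.log_div (by positivity) (ne_of_gt hpos), Real.log_mul (ne_of_gt htk) (ne_of_gt hn)]
        nlinarith [mul_le_mul_of_nonneg_left hlog (le_of_lt htk),
          mul_div_assoc (t k) s (t k * K.card),
          mul_div_mul_left s (K.card:ℝ) (ne_of_gt htk)]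
    have hsum := Finset.sum_le_sum key
    rw [Finset.sum_add_distrib, ← Finset.sum_mul, ← hs, Finset.sum_sub_distrib, ← hs,
      Finset.sum_const, nsmul_eq_mul] at hsum
    have hcc : (K.card : ℝ) * (s / K.card) = s := by field_simp
    nlinarith [hsum]

/-- Elementary Stirling-type upper bound: `log r! ≤ (r+1) log r - r + 1` for `r ≥ 1`. -/
lemma log_factorial_le : ∀ r : ℕ, 1 ≤ r →
    Real.log (Nat.factorial r) ≤ (r + 1) * Real.log r - r + 1 := by
  intro r
  induction r with
  | zero => intro h; omega
  | succ n ih =>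
    intro _
    rcases Nat.eq_zero_or_pos n with h1 | h1
    · subst h1; norm_num
    · have hn : 1 ≤ n := h1
      have hnn : (0:ℝ) < n := by exact_mod_cast hn
      have hnn1 : (0:ℝ) < n + 1 := by positivity
      have hfact : (Nat.factorial (n+1) : ℝ) = (n+1) * Nat.factorial n := by
        rw [Nat.factorial_succ]; push_cast; ring
      have hlog : Real.log (Nat.factorial (n+1))
          = Real.log (n+1) + Real.log (Nat.factorial n) := by
        rw [hfact, Real.log_mul (by positivity)
          (by exact_mod_cast Nat.cast_ne_zero.2 (Nat.factorial_ne_zero n))]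
      have key : 1 / ((n:ℝ)+1) ≤ Real.log ((n+1)/n) := by
        have h1 : Real.log ((n:ℝ)/(n+1)) ≤ (n:ℝ)/(n+1) - 1 :=
          Real.log_le_sub_one_of_pos (by positivity)
        have h2 : Real.log ((n:ℝ)/(n+1)) = - Real.log (((n:ℝ)+1)/n) := by
          rw [← Real.log_inv]; congr 1; field_simp
        have h3 : (n:ℝ)/(n+1) - 1 = - (1/((n:ℝ)+1)) := by field_simp; ring
        push_cast
        linarith [h2 ▸ h1]
      have hlogdiv : Real.log (((n:ℝ)+1)/n) = Real.log ((n:ℝ)+1) - Real.log n :=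
        Real.log_div (by positivity) (ne_of_gt hnn)
      have ihh := ih hn
      have hmul : 1 + ((n:ℝ)+1) * Real.log n ≤ ((n:ℝ)+1) * Real.log ((n:ℝ)+1) := by
        have h4 := mul_le_mul_of_nonneg_left (hlogdiv ▸ key) hnn1.le
        have h5 : ((n:ℝ)+1) * (1/((n:ℝ)+1)) = 1 := by field_simp
        nlinarith [h4, h5]
      rw [hlog]
      push_cast at ihh ⊢
      nlinarith [hmul, ihh]

section bregman

variable {m : ℕ}

/-- φ r = log(r!)/r -/
noncomputable def phi (r : ℕ) : ℝ := Real.log (Nat.factorial r) / r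

lemma phi_nonneg (r : ℕ) : 0 ≤ phi r :=
  div_nonneg (Real.log_nonneg (by exact_mod_cast Nat.one_le_iff_ne_zero.2 (Nat.factorial_ne_zero r))) (by positivity)

lemma mul_phi (s : ℕ) : (s:ℝ) * phi s = Real.log (Nat.factorial s) := by
  rcases Nat.eq_zero_or_pos s with h | h
  · subst h; simp [phi]
  · have hs : (s:ℝ) ≠ 0 := Nat.cast_ne_zero.2 (by omega)
    rw [phi]; field_simp

lemma MB_filter_mem_card {A : Finset (Fin m)} {G : Fin m → Finset (Fin m)} {i : Fin m}
    (hi : i ∈ A) (S : Finset (Fin m)) :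
    ((MB A G).filter fun f => f i ∈ S).card
      = ∑ j ∈ G i, if j ∈ S then ((MB A G).filter fun f => f i = j).card else 0 := by
  rw [Finset.card_eq_sum_card_fiberwise
      (f := fun f => f i) (t := G i)
      (fun f hf => (mem_MB.1 (Finset.mem_filter.1 hf).1).1 i hi)]
  refine Finset.sum_congr rfl fun j hjGi => ?_
  rw [Finset.filter_filter]
  by_cases hjS : j ∈ S
  · rw [if_pos hjS]
    apply Finset.card_nbij id
    · intro f hf
      rw [Finset.mem_coe, Finset.mem_filter] at hf
      rw [Finset.mem_coe, Finset.mem_filter]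
      exact ⟨hf.1, hf.2.2⟩
    · exact Set.injOn_id _
    · intro f hf
      rw [Finset.mem_coe, Finset.mem_filter] at hf
      exact ⟨f, Finset.mem_filter.2 ⟨hf.1, hf.2 ▸ hjS, hf.2⟩, rfl⟩
  · rw [if_neg hjS, Finset.card_eq_zero, Finset.filter_eq_empty_iff]
    rintro f _ ⟨h1, h2⟩
    exact hjS (h2 ▸ h1)

lemma MB_W1 {A B : Finset (Fin m)} {G : Fin m → Finset (Fin m)}
    (hB : ∀ a ∈ A, G a ⊆ B) (hcard : B.card = A.card) {a : Fin m} (ha : a ∈ A) :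
    ∑ i ∈ A.erase a, ((MB A G).filter fun f => f i ∈ G a).card
      = (MB A G).card * ((G a).card - 1) := by
  have step1 : ∀ i ∈ A.erase a, ((MB A G).filter fun f => f i ∈ G a).card
      = ∑ f ∈ MB A G, if f i ∈ G a then 1 else 0 := fun i _ => Finset.card_filter _ _
  rw [Finset.sum_congr rfl step1, Finset.sum_comm]
  have step2 : ∀ f ∈ MB A G, (∑ i ∈ A.erase a, if f i ∈ G a then 1 else 0)
      = (G a).card - 1 := by
    intro f hf
    rw [← Finset.card_filter]
    exact MB_count_erase hB hcard hf ha
  rw [Finset.sum_congr rfl step2, Finset.sum_const, smul_eq_mul]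

/-- Brégman's theorem (log form). -/
theorem bregman_aux : ∀ (n : ℕ) (A B : Finset (Fin m)) (G : Fin m → Finset (Fin m)),
    A.card = n → (∀ a ∈ A, G a ⊆ B) → B.card = A.card →
    Real.log ((MB A G).card) ≤ ∑ a ∈ A, phi (G a).card := by
  intro n
  induction n with
  | zero =>
    intro A B G hA _ _
    rw [Finset.card_eq_zero] at hA; subst hA
    simp only [Finset.sum_empty]
    have h1 : ((MB (∅ : Finset (Fin m)) G).card : ℝ) ≤ 1 := by
      exact_mod_cast MB_card_empty (m := m) G
    rcases Nat.eq_zero_or_pos (MB (∅ : Finset (Fin m)) G).card with h | h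
    · rw [h]; simp
    · have h2 : ((MB (∅ : Finset (Fin m)) G).card : ℝ) = 1 :=
        le_antisymm h1 (by exact_mod_cast h)
      rw [h2, Real.log_one]
  | succ n IH =>
    intro A B G hA hB hBA
    set p := (MB A G).card with hp
    rcases Nat.eq_zero_or_pos p with hp0 | hp0
    · rw [hp0]
      push_cast
      rw [Real.log_zero]
      exact Finset.sum_nonneg fun a _ => phi_nonneg _
    obtain ⟨f₀, hf₀⟩ := Finset.card_pos.1 hp0
    have hrpos : ∀ a ∈ A, 0 < (G a).card := fun a ha =>
      Finset.card_pos.2 ⟨f₀ a, (mem_MB.1 hf₀).1 a ha⟩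
    -- fiber counts
    set pf : Fin m → Fin m → ℕ :=
      fun i j => ((MB A G).filter fun f => f i = j).card with hpf
    -- Step 1 : per-row convexity bound
    have step1 : ∀ i ∈ A, (p:ℝ) * Real.log p ≤
        (p:ℝ) * Real.log ((G i).card) + ∑ j ∈ G i, (pf i j : ℝ) * Real.log (pf i j) := by
      intro i hi
      have hdec : (p:ℝ) = ∑ j ∈ G i, (pf i j : ℝ) := by
        exact_mod_cast MB_card_fiber (G := G) hi
      have := sum_mul_log_bound (G i) (fun j => (pf i j : ℝ)) (fun j _ => by positivity)
      rw [← hdec] at this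
      exact this
    -- Step 2 : induction hypothesis per fiber
    have step2 : ∀ i ∈ A, ∀ j ∈ G i, (pf i j : ℝ) * Real.log (pf i j) ≤
        (pf i j : ℝ) * ∑ a ∈ A.erase i, phi ((G a).erase j).card := by
      intro i hi j hj
      have hlog : Real.log (pf i j) ≤ ∑ a ∈ A.erase i, phi ((G a).erase j).card := by
        simp only [hpf]
        rw [MB_fiber_card hi hj]
        apply IH (A.erase i) (B.erase j) (fun a => (G a).erase j)
        · rw [Finset.card_erase_of_mem hi, hA]; omega
        · exact fun a haa => Finset.erase_subset_erase j (hB a (Finset.mem_of_mem_erase haa))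
        · rw [Finset.card_erase_of_mem (hB i hi hj), Finset.card_erase_of_mem hi, hBA]
      exact mul_le_mul_of_nonneg_left hlog (by positivity)
    -- combine
    have step3 : ((A.card : ℝ)) * ((p:ℝ) * Real.log p) ≤
        ∑ i ∈ A, ((p:ℝ) * Real.log ((G i).card)
          + ∑ j ∈ G i, (pf i j : ℝ) * ∑ a ∈ A.erase i, phi ((G a).erase j).card) := by
      calc ((A.card : ℝ)) * ((p:ℝ) * Real.log p)
          = ∑ _i ∈ A, (p:ℝ) * Real.log p := by rw [Finset.sum_const, nsmul_eq_mul]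
        _ ≤ _ := by
            refine Finset.sum_le_sum fun i hi => (step1 i hi).trans ?_
            exact add_le_add le_rfl (Finset.sum_le_sum fun j hj => step2 i hi j hj)
    -- reshape the inner double sums
    have reshape : ∀ i ∈ A,
        (∑ j ∈ G i, (pf i j : ℝ) * ∑ a ∈ A.erase i, phi ((G a).erase j).card)
          = ∑ a ∈ A.erase i, ∑ j ∈ G i, (pf i j : ℝ) * phi ((G a).erase j).card := by
      intro i _
      simp_rw [Finset.mul_sum]
      exact Finset.sum_comm
    have hcardA : (A.card : ℝ) = (n:ℝ) + 1 := by rw [hA]; push_cast; ring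
    -- per-column identity
    have per_a : ∀ a ∈ A,
        (p:ℝ) * Real.log ((G a).card)
          + ∑ i ∈ A.erase a, ∑ j ∈ G i, (pf i j : ℝ) * phi ((G a).erase j).card
        = ((n:ℝ) + 1) * ((p:ℝ) * phi (G a).card) := by
      intro a ha
      set r := (G a).card with hr
      have hr1 : 1 ≤ r := hrpos a ha
      have hsplit : ∀ i ∈ A.erase a, ∀ j ∈ G i,
          (pf i j : ℝ) * phi ((G a).erase j).card
            = phi (r-1) * (if j ∈ G a then (pf i j : ℝ) else 0)
              + phi r * (if j ∈ G a then 0 else (pf i j : ℝ)) := by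
        intro i _ j _
        by_cases hja : j ∈ G a
        · rw [if_pos hja, if_pos hja, Finset.card_erase_of_mem hja]; ring
        · rw [if_neg hja, if_neg hja, Finset.erase_eq_of_notMem hja]; ring
      have hU : (∑ i ∈ A.erase a, ∑ j ∈ G i, if j ∈ G a then (pf i j : ℝ) else 0)
          = ((r:ℝ) - 1) * p := by
        have hUnat : ∑ i ∈ A.erase a, ∑ j ∈ G i, (if j ∈ G a then pf i j else 0)
            = p * (r - 1) := by
          have e1 : ∀ i ∈ A.erase a, (∑ j ∈ G i, if j ∈ G a then pf i j else 0)
              = ((MB A G).filter fun f => f i ∈ G a).card := by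
            intro i hi'
            exact (MB_filter_mem_card (Finset.mem_of_mem_erase hi') (G a)).symm
          rw [Finset.sum_congr rfl e1, MB_W1 hB hBA ha]
        have hcast : ((∑ i ∈ A.erase a, ∑ j ∈ G i, if j ∈ G a then pf i j else 0 : ℕ) : ℝ)
            = ∑ i ∈ A.erase a, ∑ j ∈ G i, (if j ∈ G a then (pf i j : ℝ) else 0) := by
          push_cast [apply_ite (Nat.cast : ℕ → ℝ)]
          rfl
        rw [← hcast, hUnat]
        push_cast [Nat.cast_sub hr1]
        ring
      have htot : (∑ i ∈ A.erase a, ∑ j ∈ G i, (pf i j : ℝ)) = (n:ℝ) * p := by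
        have e2 : ∀ i ∈ A.erase a, (∑ j ∈ G i, (pf i j : ℝ)) = (p:ℝ) := by
          intro i hi'
          exact_mod_cast (MB_card_fiber (G := G) (Finset.mem_of_mem_erase hi')).symm
        rw [Finset.sum_congr rfl e2, Finset.sum_const, nsmul_eq_mul,
          Finset.card_erase_of_mem ha, hA]
        push_cast; ring
      have hV : (∑ i ∈ A.erase a, ∑ j ∈ G i, if j ∈ G a then (0:ℝ) else (pf i j : ℝ))
          = (n:ℝ) * p - ((r:ℝ) - 1) * p := by
        calc (∑ i ∈ A.erase a, ∑ j ∈ G i, if j ∈ G a then (0:ℝ) else (pf i j : ℝ))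
            = ∑ i ∈ A.erase a, ∑ j ∈ G i,
                ((pf i j : ℝ) - (if j ∈ G a then (pf i j : ℝ) else 0)) := by
              refine Finset.sum_congr rfl fun i hi' => Finset.sum_congr rfl fun j hj' => ?_
              by_cases hja : j ∈ G a <;> simp [hja]
          _ = (n:ℝ) * p - ((r:ℝ) - 1) * p := by
              simp_rw [Finset.sum_sub_distrib]
              rw [htot, hU]
      have hFa : (∑ i ∈ A.erase a, ∑ j ∈ G i, (pf i j : ℝ) * phi ((G a).erase j).card)
          = phi (r-1) * (((r:ℝ) - 1) * p) + phi r * ((n:ℝ) * p - ((r:ℝ) - 1) * p) := by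
        calc (∑ i ∈ A.erase a, ∑ j ∈ G i, (pf i j : ℝ) * phi ((G a).erase j).card)
            = ∑ i ∈ A.erase a, ∑ j ∈ G i,
              (phi (r-1) * (if j ∈ G a then (pf i j : ℝ) else 0)
                + phi r * (if j ∈ G a then 0 else (pf i j : ℝ))) := by
              refine Finset.sum_congr rfl fun i hi' => Finset.sum_congr rfl fun j hj' => ?_
              exact hsplit i hi' j hj'
          _ = phi (r-1) * (∑ i ∈ A.erase a, ∑ j ∈ G i, if j ∈ G a then (pf i j : ℝ) else 0)
              + phi r * (∑ i ∈ A.erase a, ∑ j ∈ G i, if j ∈ G a then (0:ℝ) else (pf i j : ℝ)) := by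
              simp_rw [Finset.sum_add_distrib, Finset.mul_sum]
          _ = _ := by rw [hU, hV]
      rw [hFa]
      have hrne : (r:ℝ) ≠ 0 := Nat.cast_ne_zero.2 (by omega)
      have hfne : ((Nat.factorial (r-1) : ℕ) : ℝ) ≠ 0 :=
        Nat.cast_ne_zero.2 (Nat.factorial_ne_zero _)
      have id3 : (r:ℝ) * phi r = Real.log (Nat.factorial r) := mul_phi r
      have id2 : phi (r-1) * ((r:ℝ) - 1) = Real.log (Nat.factorial (r-1)) := by
        have h5 := mul_phi (r-1)
        rw [Nat.cast_sub hr1] at h5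
        push_cast at h5 ⊢
        linarith [h5]
      have id1 : Real.log (r:ℝ) + Real.log (Nat.factorial (r-1))
          = Real.log (Nat.factorial r) := by
        rw [← Real.log_mul hrne hfne, ← Nat.cast_mul, Nat.mul_factorial_pred (by omega)]
      linear_combination (p:ℝ) * id1 + (p:ℝ) * id2 - (p:ℝ) * id3
    -- final assembly
    have final : ((n:ℝ) + 1) * ((p:ℝ) * Real.log p)
        ≤ ((n:ℝ) + 1) * ((p:ℝ) * ∑ a ∈ A, phi (G a).card) := by
      calc ((n:ℝ) + 1) * ((p:ℝ) * Real.log p)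
          = (A.card : ℝ) * ((p:ℝ) * Real.log p) := by rw [hcardA]
        _ ≤ ∑ i ∈ A, ((p:ℝ) * Real.log ((G i).card)
              + ∑ j ∈ G i, (pf i j : ℝ) * ∑ a ∈ A.erase i, phi ((G a).erase j).card) := step3
        _ = ∑ i ∈ A, ((p:ℝ) * Real.log ((G i).card)
              + ∑ a ∈ A.erase i, ∑ j ∈ G i, (pf i j : ℝ) * phi ((G a).erase j).card) := by
            exact Finset.sum_congr rfl fun i hi => by rw [reshape i hi]
        _ = ∑ i ∈ A, ((p:ℝ) * Real.log ((G i).card))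
              + ∑ i ∈ A, ∑ a ∈ A.erase i, ∑ j ∈ G i, (pf i j : ℝ) * phi ((G a).erase j).card := by
            rw [Finset.sum_add_distrib]
        _ = ∑ a ∈ A, ((p:ℝ) * Real.log ((G a).card))
              + ∑ a ∈ A, ∑ i ∈ A.erase a, ∑ j ∈ G i, (pf i j : ℝ) * phi ((G a).erase j).card := by
            rw [sum_sum_erase A (fun i a => ∑ j ∈ G i, (pf i j : ℝ) * phi ((G a).erase j).card)]
        _ = ∑ a ∈ A, (((p:ℝ) * Real.log ((G a).card))
              + ∑ i ∈ A.erase a, ∑ j ∈ G i, (pf i j : ℝ) * phi ((G a).erase j).card) := by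
            rw [Finset.sum_add_distrib]
        _ = ∑ a ∈ A, ((n:ℝ) + 1) * ((p:ℝ) * phi (G a).card) := Finset.sum_congr rfl per_a
        _ = ((n:ℝ) + 1) * ((p:ℝ) * ∑ a ∈ A, phi (G a).card) := by
            rw [← Finset.mul_sum, ← Finset.mul_sum]
    have hn1 : (0:ℝ) < (n:ℝ) + 1 := by positivity
    have hppos : (0:ℝ) < (p:ℝ) := by exact_mod_cast hp0
    exact le_of_mul_le_mul_left (le_of_mul_le_mul_left final hn1) hppos

end bregman

section analytic

lemma pow_mul_factorial_le (r d : ℕ) : r ^ d * Nat.factorial r ≤ Nat.factorial (r + d) := by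
  induction d with
  | zero => simp
  | succ k ih =>
    have e0 : r ^ (k+1) * r.factorial = r * (r ^ k * r.factorial) := by ring
    rw [e0]
    calc r * (r ^ k * r.factorial) ≤ r * (r + k).factorial := Nat.mul_le_mul_left r ih
      _ ≤ (r + k + 1) * (r + k).factorial := Nat.mul_le_mul_right _ (by omega)
      _ = (r + (k+1)).factorial := by
          have e : r + (k+1) = (r+k) + 1 := by omega
          rw [e, Nat.factorial_succ]

lemma phi_le_bracket {M r d : ℕ} (hM : M = r + d) (hr1 : 1 ≤ r) (hhalf : (M:ℝ) ≤ 2 * r) :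
    phi r ≤ Real.log (Nat.factorial M) / M - d / M + d * (2 + 2 * Real.log M) / (M:ℝ)^2 := by
  have hR0 : (0:ℝ) < r := by exact_mod_cast hr1
  have hM1 : 1 ≤ M := by omega
  have hM0 : (0:ℝ) < M := by exact_mod_cast hM1
  have hDD0 : (0:ℝ) ≤ d := Nat.cast_nonneg d
  have hfr0 : (0:ℝ) < (Nat.factorial r : ℝ) := by exact_mod_cast Nat.factorial_pos r
  have hMeq : (M:ℝ) = (r:ℝ) + (d:ℝ) := by rw [hM]; push_cast; ring
  have f1 : (d:ℝ) * Real.log r + Real.log (Nat.factorial r) ≤ Real.log (Nat.factorial M) := by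
    have hnat := pow_mul_factorial_le r d
    rw [← hM] at hnat
    have hcast : ((r ^ d * Nat.factorial r : ℕ) : ℝ) ≤ (Nat.factorial M : ℝ) := by
      exact_mod_cast hnat
    have hlog := Real.log_le_log (by positivity) hcast
    rw [Nat.cast_mul, Nat.cast_pow, Real.log_mul (by positivity) (ne_of_gt hfr0),
      Real.log_pow] at hlog
    exact_mod_cast hlog
  have f2 : Real.log (Nat.factorial r) ≤ ((r:ℝ) + 1) * Real.log r - r + 1 :=
    log_factorial_le r hr1
  have f4 : Real.log r ≤ Real.log M :=
    Real.log_le_log hR0 (by exact_mod_cast (by omega : r ≤ M))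
  have f7 : (0:ℝ) ≤ Real.log r := Real.log_nonneg (by exact_mod_cast hr1)
  have s1 : Real.log (Nat.factorial r) * M - Real.log (Nat.factorial M) * r + (d:ℝ) * r
      ≤ (d:ℝ) * (Real.log r + 1) := by
    have h1' := mul_le_mul_of_nonneg_left f1 hR0.le
    have h2' := mul_le_mul_of_nonneg_left f2 hDD0
    rw [hMeq]
    nlinarith [h1', h2']
  have s3 : (M:ℝ) * ((d:ℝ) * (Real.log r + 1)) ≤ (2 * r) * ((d:ℝ) * (Real.log M + 1)) := by
    have t1 : (d:ℝ) * (Real.log r + 1) ≤ (d:ℝ) * (Real.log M + 1) :=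
      mul_le_mul_of_nonneg_left (by linarith) hDD0
    have t2 : (0:ℝ) ≤ (d:ℝ) * (Real.log r + 1) := mul_nonneg hDD0 (by linarith)
    exact mul_le_mul hhalf t1 t2 (by positivity)
  have main : Real.log (Nat.factorial r) * (M:ℝ)^2
      ≤ (Real.log (Nat.factorial M) - d) * ((r:ℝ) * M) + (d:ℝ) * (2 + 2 * Real.log M) * r := by
    have s2 := mul_le_mul_of_nonneg_left s1 hM0.le
    nlinarith [s2, s3]
  show Real.log (Nat.factorial r) / r ≤ _
  calc Real.log (Nat.factorial r) / r
      = (Real.log (Nat.factorial r) * (M:ℝ)^2) / ((r:ℝ) * (M:ℝ)^2) := by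
        rw [mul_div_mul_right _ _ (by positivity)]
    _ ≤ ((Real.log (Nat.factorial M) - d) * ((r:ℝ) * M) + (d:ℝ) * (2 + 2 * Real.log M) * r)
          / ((r:ℝ) * (M:ℝ)^2) := by
        apply div_le_div_of_nonneg_right main (by positivity)
    _ = Real.log (Nat.factorial M) / M - d / M + d * (2 + 2 * Real.log M) / (M:ℝ)^2 := by
        field_simp

end analytic

section glue

variable {m : ℕ}

lemma Gcard (H : Finset (Fin m × Fin m)) (a : Fin m) :
    (Finset.univ.filter fun b => (a, b) ∉ H).card = m - (H.filter fun e => e.1 = a).card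
    ∧ (H.filter fun e => e.1 = a).card ≤ m := by
  have hfib : (Finset.univ.filter fun b => (a, b) ∈ H).card
      = (H.filter fun e => e.1 = a).card := by
    apply Finset.card_nbij (fun b => (a, b))
    · intro b hb
      rw [Finset.mem_coe, Finset.mem_filter] at hb
      rw [Finset.mem_coe, Finset.mem_filter]
      exact ⟨hb.2, rfl⟩
    · intro b _ b' _ hbb'
      exact congrArg Prod.snd hbb'
    · intro e he
      rw [Finset.mem_coe, Finset.mem_filter] at he
      have heq : (a, e.2) = e := by
        have h2 : e = (e.1, e.2) := rfl
        rw [h2, he.2]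
      refine ⟨e.2, ?_, heq⟩
      rw [Finset.mem_coe, Finset.mem_filter]
      exact ⟨Finset.mem_univ _, heq ▸ he.1⟩
  have hsplit := Finset.card_filter_add_card_filter_not
    (s := (Finset.univ : Finset (Fin m))) (p := fun b => (a, b) ∈ H)
  rw [Finset.card_univ, Fintype.card_fin, hfib] at hsplit
  constructor
  · omega
  · omega

lemma Hcard_sum (H : Finset (Fin m × Fin m)) :
    H.card = ∑ a : Fin m, (H.filter fun e => e.1 = a).card :=
  Finset.card_eq_sum_card_fiberwise fun e _ => Finset.mem_univ _

lemma ncard_eq_MB (H : Finset (Fin m × Fin m)) :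
    Set.ncard {σ : Equiv.Perm (Fin m) | ∀ a, (a, σ a) ∉ H}
      = (MB Finset.univ (fun a => Finset.univ.filter fun b => (a, b) ∉ H)).card := by
  have hset : {σ : Equiv.Perm (Fin m) | ∀ a, (a, σ a) ∉ H}
      = ↑(Finset.univ.filter fun σ : Equiv.Perm (Fin m) => ∀ a, (a, σ a) ∉ H) := by
    ext σ; simp
  rw [hset, Set.ncard_coe_finset]
  apply Finset.card_bij (fun (σ : Equiv.Perm (Fin m)) _ => (σ : Fin m → Fin m))
  · intro σ hσ
    rw [Finset.mem_filter] at hσ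
    rw [mem_MB]
    exact ⟨fun a _ => Finset.mem_filter.2 ⟨Finset.mem_univ _, hσ.2 a⟩,
      fun a _ b _ hab => σ.injective hab,
      fun a ha => absurd (Finset.mem_univ a) ha⟩
  · intro σ _ τ _ h
    exact Equiv.coe_fn_injective h
  · intro f hf
    rw [mem_MB] at hf
    have hinj : Function.Injective f := fun a b hab =>
      hf.2.1 a (Finset.mem_univ a) b (Finset.mem_univ b) hab
    have hbij : Function.Bijective f := Finite.injective_iff_bijective.1 hinj
    refine ⟨Equiv.ofBijective f hbij, Finset.mem_filter.2 ⟨Finset.mem_univ _, fun a => ?_⟩, rfl⟩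
    have h1 := hf.1 a (Finset.mem_univ a)
    rw [Finset.mem_filter] at h1
    exact h1.2

end glue


/-- Corollary of Brégman's theorem: there is an absolute constant `C > 0` such that for every
`m ≥ 2` and every spanning subgraph `H` of `K_{m,m}` (encoded as its set of edges, i.e. a set of
pairs `(a, b)` with `a` in the part `A` and `b` in the part `B`) with maximum degree at most
`D ≤ m/2`, the number of perfect matchings of `K_{m,m} ∖ H` (encoded as bijections `σ` from `A`
to `B` avoiding the edges of `H`) is at most `exp(C·D·log m/m) · m! · exp(−|E(H)|/m)`. -/
theorem bregman_corollary_matchings_upper_bound :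
    ∃ C : ℝ, 0 < C ∧ ∀ m : ℕ, 2 ≤ m → ∀ D : ℕ, ∀ H : Finset (Fin m × Fin m),
      (D : ℝ) ≤ (m : ℝ) / 2 →
      (∀ a : Fin m, (H.filter fun e => e.1 = a).card ≤ D) →
      (∀ b : Fin m, (H.filter fun e => e.2 = b).card ≤ D) →
      (Set.ncard {σ : Equiv.Perm (Fin m) | ∀ a, (a, σ a) ∉ H} : ℝ) ≤
        Real.exp (C * (D : ℝ) * Real.log (m : ℝ) / (m : ℝ)) * (m.factorial : ℝ) *
          Real.exp (-(H.card : ℝ) / (m : ℝ)) := by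
  refine ⟨7, by norm_num, ?_⟩
  intro m hm D H hD hrow _hcol
  have hm2 : (2:ℝ) ≤ m := by exact_mod_cast hm
  have hm0 : (0:ℝ) < m := by linarith
  have hmne : (m:ℝ) ≠ 0 := ne_of_gt hm0
  have hfact0 : (0:ℝ) < (Nat.factorial m : ℝ) := by exact_mod_cast Nat.factorial_pos m
  have h2d : ∀ a : Fin m, 2 * (H.filter fun e => e.1 = a).card ≤ m := by
    intro a
    have h1 : ((H.filter fun e => e.1 = a).card : ℝ) ≤ (D:ℝ) := by exact_mod_cast hrow a
    have h2 : ((2 * (H.filter fun e => e.1 = a).card : ℕ) : ℝ) ≤ (m:ℝ) := by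
      push_cast; linarith
    exact_mod_cast h2
  have hbreg := bregman_aux m Finset.univ Finset.univ
      (fun a => Finset.univ.filter fun b => (a, b) ∉ H) (by simp)
      (fun a _ => Finset.subset_univ _) rfl
  have hbrack : ∀ a : Fin m, phi ((Finset.univ.filter fun b => (a, b) ∉ H).card)
      ≤ Real.log (Nat.factorial m) / m - ((H.filter fun e => e.1 = a).card : ℝ) / m
        + ((H.filter fun e => e.1 = a).card : ℝ) * (2 + 2 * Real.log m) / (m:ℝ)^2 := by
    intro a
    obtain ⟨hc, hle⟩ := Gcard H a
    rw [hc]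
    have hd2 := h2d a
    apply phi_le_bracket
    · omega
    · omega
    · have h3 : m ≤ 2 * (m - (H.filter fun e => e.1 = a).card) := by omega
      exact_mod_cast h3
  have hHsum : (H.card : ℝ) = ∑ a : Fin m, ((H.filter fun e => e.1 = a).card : ℝ) := by
    rw [Hcard_sum H]
    push_cast
    rfl
  have hsum1 : ∑ a : Fin m, phi ((Finset.univ.filter fun b => (a, b) ∉ H).card)
      ≤ Real.log (Nat.factorial m) - (H.card : ℝ) / m
        + (H.card : ℝ) * (2 + 2 * Real.log m) / (m:ℝ)^2 := by
    calc ∑ a : Fin m, phi ((Finset.univ.filter fun b => (a, b) ∉ H).card)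
        ≤ ∑ a : Fin m, (Real.log (Nat.factorial m) / m
            - ((H.filter fun e => e.1 = a).card : ℝ) / m
            + ((H.filter fun e => e.1 = a).card : ℝ) * (2 + 2 * Real.log m) / (m:ℝ)^2) :=
          Finset.sum_le_sum fun a _ => hbrack a
      _ = (m:ℝ) * (Real.log (Nat.factorial m) / m)
            - (∑ a : Fin m, ((H.filter fun e => e.1 = a).card : ℝ)) / m
            + (∑ a : Fin m, ((H.filter fun e => e.1 = a).card : ℝ)) * (2 + 2 * Real.log m) / (m:ℝ)^2 := by
          rw [Finset.sum_add_distrib, Finset.sum_sub_distrib, Finset.sum_const,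
            Finset.card_univ, Fintype.card_fin, nsmul_eq_mul, ← Finset.sum_div]
          simp_rw [mul_div_assoc]
          rw [← Finset.sum_mul]
      _ = Real.log (Nat.factorial m) - (H.card : ℝ) / m
            + (H.card : ℝ) * (2 + 2 * Real.log m) / (m:ℝ)^2 := by
          rw [← hHsum, mul_div_cancel₀ _ hmne]
  have hterm : (H.card : ℝ) * (2 + 2 * Real.log m) / (m:ℝ)^2
      ≤ 7 * (D:ℝ) * Real.log m / (m:ℝ) := by
    have hlog4 : (0.4:ℝ) ≤ Real.log m := by
      have hl2 : Real.log 2 ≤ Real.log m := Real.log_le_log (by norm_num) hm2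
      linarith [Real.log_two_gt_d9]
    have h7 : 2 + 2 * Real.log m ≤ 7 * Real.log m := by linarith
    have hHD : (H.card : ℝ) ≤ (m:ℝ) * D := by
      have hn : H.card ≤ m * D := by
        rw [Hcard_sum H]
        calc ∑ a : Fin m, (H.filter fun e => e.1 = a).card ≤ ∑ _a : Fin m, D :=
            Finset.sum_le_sum fun a _ => hrow a
          _ = m * D := by rw [Finset.sum_const, Finset.card_univ, Fintype.card_fin, smul_eq_mul]
      exact_mod_cast hn
    have hnum : (H.card : ℝ) * (2 + 2 * Real.log m) ≤ ((m:ℝ) * D) * (7 * Real.log m) :=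
      mul_le_mul hHD h7 (by linarith) (by positivity)
    calc (H.card : ℝ) * (2 + 2 * Real.log m) / (m:ℝ)^2
        ≤ ((m:ℝ) * D) * (7 * Real.log m) / (m:ℝ)^2 :=
          div_le_div_of_nonneg_right hnum (by positivity)
      _ = 7 * (D:ℝ) * Real.log m / (m:ℝ) := by field_simp
  rw [ncard_eq_MB H]
  set N := (MB Finset.univ (fun a => Finset.univ.filter fun b => (a, b) ∉ H)).card with hN
  have hlogN : Real.log N ≤ 7 * (D:ℝ) * Real.log m / (m:ℝ) + Real.log (Nat.factorial m)
      + (-(H.card : ℝ) / m) := by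
    have hc := hbreg.trans hsum1
    have : -(H.card : ℝ) / m = -((H.card : ℝ) / m) := by ring
    rw [this]
    linarith [hterm, hc]
  rcases Nat.eq_zero_or_pos N with h0 | hpos
  · rw [h0]; push_cast; positivity
  · have hN0 : (0:ℝ) < N := by exact_mod_cast hpos
    calc (N:ℝ) = Real.exp (Real.log N) := (Real.exp_log hN0).symm
      _ ≤ Real.exp (7 * (D:ℝ) * Real.log m / (m:ℝ) + Real.log (Nat.factorial m)
            + (-(H.card : ℝ) / m)) := Real.exp_le_exp.2 hlogN
      _ = Real.exp (7 * (D:ℝ) * Real.log m / (m:ℝ)) * (Nat.factorial m : ℝ)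
            * Real.exp (-(H.card : ℝ) / m) := by
          rw [Real.exp_add, Real.exp_add, Real.exp_log hfact0]
end

section
/- There exists an absolute constant C > 0 such that the following holds. Let m ≥ 1 and let H be a spanning subgraph of K_{m,m} with |E(H)| < m/4. Then the number of perfect matchings of K_{m,m} ∖ H is at least (1 − C·|E(H)|²/m²) · m! · exp(−|E(H)|/m). In fact, one may take C = 10: the number of perfect matchings of K_{m,m} ∖ H is at least (1 − 10·|E(H)|²/m²) · m! · exp(−|E(H)|/m). -/
lemma fiber_card (m : ℕ) (a b : Fin m) :
    (Finset.univ.filter (fun σ : Equiv.Perm (Fin m) => σ a = b)).card = (m - 1).factorial := by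
  have hm : 0 < m := a.pos
  have key : ∀ b' : Fin m,
      (Finset.univ.filter fun σ : Equiv.Perm (Fin m) => σ a = b').card
        = (Finset.univ.filter fun σ : Equiv.Perm (Fin m) => σ a = b).card := by
    intro b'
    apply Finset.card_bij' (fun σ _ => Equiv.swap b' b * σ) (fun σ _ => Equiv.swap b' b * σ)
    · intro σ hσ
      simp only [Finset.mem_filter, Finset.mem_univ, true_and] at hσ ⊢
      simp [hσ, Equiv.swap_apply_left]
    · intro σ hσ
      simp only [Finset.mem_filter, Finset.mem_univ, true_and] at hσ ⊢
      simp [hσ, Equiv.swap_apply_right]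
    · intro σ hσ
      simp [← mul_assoc]
    · intro σ hσ
      simp [← mul_assoc]
  have hsum : ∑ b' : Fin m, (Finset.univ.filter fun σ : Equiv.Perm (Fin m) => σ a = b').card
      = m.factorial := by
    rw [← Finset.card_eq_sum_card_fiberwise (fun σ _ => Finset.mem_univ (σ a))]
    simp [Fintype.card_perm]
  rw [Finset.sum_congr rfl (fun b' _ => key b'), Finset.sum_const, Finset.card_univ,
    Fintype.card_fin, smul_eq_mul] at hsum
  have := Nat.mul_factorial_pred hm.ne'
  exact Nat.eq_of_mul_eq_mul_left hm (hsum.trans this.symm)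

/-- For every `m ≥ 1` and every spanning subgraph `H` of `K_{m,m}` (encoded as its set of edges,
i.e. a set of pairs `(a, b)` with `a` in the part `A` and `b` in the part `B`) with
`|E(H)| < m/4`, the number of perfect matchings of `K_{m,m} ∖ H` (encoded as bijections `σ`
from `A` to `B` avoiding the edges of `H`) is at least
`(1 − 10·|E(H)|²/m²) · m! · exp(−|E(H)|/m)`; in particular the absolute constant `C = 10`
works. -/
theorem lower_bound_perfect_matchings_almost_complete (m : ℕ) (hm : 1 ≤ m)
    (H : Finset (Fin m × Fin m)) (hH : (H.card : ℝ) < (m : ℝ) / 4) :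
    (1 - 10 * (H.card : ℝ) ^ 2 / (m : ℝ) ^ 2) * (m.factorial : ℝ) *
      Real.exp (-(H.card : ℝ) / (m : ℝ)) ≤
    (Set.ncard {σ : Equiv.Perm (Fin m) | ∀ a, (a, σ a) ∉ H} : ℝ) := by
  classical
  have hm0 : (0 : ℝ) < m := by exact_mod_cast hm
  set t : ℝ := (H.card : ℝ) with ht
  set x : ℝ := t / m with hx
  have hx0 : 0 ≤ x := div_nonneg (by positivity) hm0.le
  have hx4 : x < 1 / 4 := by
    rw [hx, div_lt_div_iff₀ hm0 (by norm_num)]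
    linarith [hH]
  -- identify the set with a finset
  have hset : {σ : Equiv.Perm (Fin m) | ∀ a, (a, σ a) ∉ H}
      = ↑(Finset.univ.filter (fun σ : Equiv.Perm (Fin m) => ∀ a, (a, σ a) ∉ H)) := by
    ext σ; simp
  rw [hset, Set.ncard_coe_finset]
  set good := Finset.univ.filter (fun σ : Equiv.Perm (Fin m) => ∀ a, (a, σ a) ∉ H) with hgood
  set bad := Finset.univ.filter (fun σ : Equiv.Perm (Fin m) => ¬ ∀ a, (a, σ a) ∉ H) with hbad
  have hcards : good.card + bad.card = m.factorial := by
    rw [hgood, hbad, Finset.card_filter_add_card_filter_not]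
    simp [Fintype.card_perm]
  -- bound bad
  have hbadsub : bad ⊆ H.biUnion (fun e => Finset.univ.filter
      (fun σ : Equiv.Perm (Fin m) => σ e.1 = e.2)) := by
    intro σ hσ
    simp only [hbad, Finset.mem_filter, Finset.mem_univ, true_and, not_forall, not_not] at hσ
    obtain ⟨a, ha⟩ := hσ
    simp only [Finset.mem_biUnion, Finset.mem_filter, Finset.mem_univ, true_and]
    exact ⟨(a, σ a), ha, rfl⟩
  have hbadcard : bad.card ≤ H.card * (m - 1).factorial := by
    calc bad.card ≤ (H.biUnion (fun e => Finset.univ.filter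
        (fun σ : Equiv.Perm (Fin m) => σ e.1 = e.2))).card := Finset.card_le_card hbadsub
      _ ≤ ∑ e ∈ H, (Finset.univ.filter
        (fun σ : Equiv.Perm (Fin m) => σ e.1 = e.2)).card := Finset.card_biUnion_le
      _ = H.card * (m - 1).factorial := by
        rw [Finset.sum_congr rfl (fun e _ => fiber_card m e.1 e.2), Finset.sum_const, smul_eq_mul]
  -- so good.card ≥ m! - t*(m-1)!  i.e. ≥ (1 - x) m!
  have hfact : (m : ℝ) * ((m - 1).factorial : ℝ) = (m.factorial : ℝ) := by
    exact_mod_cast congrArg (Nat.cast : ℕ → ℝ) (Nat.mul_factorial_pred (by omega))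
  have hgoodge : (1 - x) * (m.factorial : ℝ) ≤ (good.card : ℝ) := by
    have h1 : (good.card : ℝ) = (m.factorial : ℝ) - (bad.card : ℝ) := by
      have := hcards
      push_cast [← this]
      ring
    have h2 : (bad.card : ℝ) ≤ t * ((m - 1).factorial : ℝ) := by
      rw [ht]; exact_mod_cast hbadcard
    have h3 : x * (m.factorial : ℝ) = t * ((m - 1).factorial : ℝ) := by
      rw [hx, ← hfact]; field_simp
    rw [h1]; nlinarith [h2, h3]
  -- analytic inequality: (1 - 10 x^2) e^{-x} ≤ 1 - x
  have hexp : Real.exp (-x) ≤ 1 / (1 + x) := by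
    rw [le_div_iff₀ (by linarith)]
    have h := Real.add_one_le_exp x
    calc Real.exp (-x) * (1 + x) ≤ Real.exp (-x) * Real.exp x := by
          apply mul_le_mul_of_nonneg_left _ (Real.exp_nonneg _)
          linarith
      _ = 1 := by rw [← Real.exp_add]; simp
  have h10 : 0 ≤ 1 - 10 * x ^ 2 := by nlinarith
  have hanal : (1 - 10 * x ^ 2) * Real.exp (-x) ≤ 1 - x := by
    calc (1 - 10 * x ^ 2) * Real.exp (-x) ≤ (1 - 10 * x ^ 2) * (1 / (1 + x)) :=
          mul_le_mul_of_nonneg_left hexp h10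
      _ ≤ (1 - x ^ 2) * (1 / (1 + x)) := by
          apply mul_le_mul_of_nonneg_right _ (by positivity)
          nlinarith
      _ = 1 - x := by field_simp; ring
  -- combine
  have hcoef : 1 - 10 * t ^ 2 / (m : ℝ) ^ 2 = 1 - 10 * x ^ 2 := by
    rw [hx]; field_simp
  calc (1 - 10 * t ^ 2 / (m : ℝ) ^ 2) * (m.factorial : ℝ) * Real.exp (-t / m)
      = ((1 - 10 * x ^ 2) * Real.exp (-x)) * (m.factorial : ℝ) := by
        rw [hcoef, hx, neg_div]; ring
    _ ≤ (1 - x) * (m.factorial : ℝ) := by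
        apply mul_le_mul_of_nonneg_right hanal (by positivity)
    _ ≤ (good.card : ℝ) := hgoodge
end
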